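/- Let N ≥ 1, T > 0, and let A : ℝ → Matrix (Fin N) (Fin N) ℝ be continuous with A(t+T) = A(t) for all t. Let Φ : ℝ → Matrix (Fin N) (Fin N) ℝ be differentiable with Φ'(t) = A(t) * Φ(t) for all t and Φ(0) = 1 (the fundamental matrix solution). Suppose x : ℝ → (Fin N → ℝ) is differentiable with x'(t) = (A t).mulVec (x t) for all t, x is T-periodic, and x(0) ≠ 0. Then (Φ T).mulVec (x 0) = x 0; in particular 1 is an eigenvalue of the monodromy matrix Φ(T), i.e., at least one Floquet multiplier of the periodic linear system equals 1. -/

import Mathlib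

open Set

/-- If an LPTV system `x' = A(t) x` with fundamental matrix `Φ` has a nontrivial
T-periodic solution, then the monodromy matrix `Φ(T)` fixes `x 0`; in particular `1`
is a Floquet multiplier. -/
theorem floquet_multiplier_one_of_periodic_solution
    (N : ℕ) (hN : 1 ≤ N) (T : ℝ) (hT : 0 < T)
    (A : ℝ → Matrix (Fin N) (Fin N) ℝ)
    (hAcont : ∀ i j : Fin N, Continuous fun t => A t i j)
    (hAper : ∀ t : ℝ, A (t + T) = A t)
    (Φ : ℝ → Matrix (Fin N) (Fin N) ℝ)
    (hΦ : ∀ (t : ℝ) (i j : Fin N), HasDerivAt (fun s => Φ s i j) ((A t * Φ t) i j) t)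
    (hΦ0 : Φ 0 = 1)
    (x : ℝ → (Fin N → ℝ))
    (hx : ∀ t : ℝ, HasDerivAt x ((A t).mulVec (x t)) t)
    (hxper : ∀ t : ℝ, x (t + T) = x t)
    (hx0 : x 0 ≠ 0) :
    (Φ T).mulVec (x 0) = x 0 ∧
      Module.End.HasEigenvalue (Matrix.toLin' (Φ T)) 1 := by
  -- clamp function
  set c : ℝ → ℝ := fun t => max 0 (min t T) with hc
  have hc_cont : Continuous c := continuous_const.max (continuous_id.min continuous_const)
  have hc_eq : ∀ t ∈ Ico (0:ℝ) T, c t = t := by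
    intro t ht
    simp only [hc]
    rw [min_eq_left ht.2.le, max_eq_right ht.1]
  -- bound on the matrix entries over the compact interval
  have hg_cont : Continuous fun t => ∑ i : Fin N, ∑ j : Fin N, |A (c t) i j| := by
    refine continuous_finset_sum _ fun i _ => continuous_finset_sum _ fun j _ => ?_
    exact ((hAcont i j).comp hc_cont).abs
  obtain ⟨C, hC⟩ := (isCompact_Icc (a := (0:ℝ)) (b := T)).exists_bound_of_continuousOn
    (hg_cont.continuousOn)
  have hC' : ∀ t : ℝ, ∀ i : Fin N, ∑ j : Fin N, |A (c t) i j| ≤ C := by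
    intro t i
    have h1 : c t ∈ Icc (0:ℝ) T := by
      constructor
      · exact le_max_left _ _
      · simp only [hc]
        exact max_le hT.le (min_le_right _ _)
    -- g is invariant under clamping: c (c t) = c t
    have h2 := hC (c t) (by
      simp only [hc]
      constructor
      · exact le_max_left _ _
      · exact max_le hT.le (min_le_right _ _))
    have hcc : c (c t) = c t := by
      simp only [hc]
      rw [min_eq_left (max_le hT.le (min_le_right _ _)), max_eq_right (le_max_left _ _)]
    rw [Real.norm_eq_abs] at h2
    rw [hcc] at h2
    have h3 : ∑ j : Fin N, |A (c t) i j| ≤ ∑ i' : Fin N, ∑ j : Fin N, |A (c t) i' j| :=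
      Finset.single_le_sum (f := fun i' => ∑ j : Fin N, |A (c t) i' j|)
        (fun i' _ => Finset.sum_nonneg fun j _ => abs_nonneg _) (Finset.mem_univ i)
    exact le_trans h3 (le_trans (le_abs_self _) h2)
  have hC0 : 0 ≤ C := by
    have := hC' 0 ⟨0, hN⟩
    exact le_trans (Finset.sum_nonneg fun j _ => abs_nonneg _) this
  -- the vector field and its Lipschitz property
  set v : ℝ → (Fin N → ℝ) → (Fin N → ℝ) := fun t y => (A (c t)).mulVec y with hv
  have hlip : ∀ t, LipschitzWith C.toNNReal (v t) := by
    intro t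
    apply LipschitzWith.of_dist_le_mul
    intro y z
    have hCcoe : (C.toNNReal : ℝ) = C := Real.coe_toNNReal _ hC0
    rw [hCcoe]
    rw [dist_pi_le_iff (by positivity)]
    intro i
    simp only [hv, Matrix.mulVec, dotProduct, Real.dist_eq]
    rw [← Finset.sum_sub_distrib]
    calc |∑ j : Fin N, (A (c t) i j * y j - A (c t) i j * z j)|
        ≤ ∑ j : Fin N, |A (c t) i j * y j - A (c t) i j * z j| := Finset.abs_sum_le_sum_abs _ _
      _ = ∑ j : Fin N, |A (c t) i j| * |y j - z j| := by
          congr 1; ext j; rw [← mul_sub, abs_mul]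
      _ ≤ ∑ j : Fin N, |A (c t) i j| * dist y z := by
          refine Finset.sum_le_sum fun j _ => ?_
          refine mul_le_mul_of_nonneg_left ?_ (abs_nonneg _)
          rw [← Real.dist_eq]
          exact dist_le_pi_dist y z j
      _ = (∑ j : Fin N, |A (c t) i j|) * dist y z := by rw [Finset.sum_mul]
      _ ≤ C * dist y z := mul_le_mul_of_nonneg_right (hC' t i) dist_nonneg
  -- the second solution
  set g : ℝ → (Fin N → ℝ) := fun t => (Φ t).mulVec (x 0) with hg
  have hg' : ∀ t : ℝ, HasDerivAt g ((A t).mulVec (g t)) t := by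
    intro t
    rw [hasDerivAt_pi]
    intro i
    have : HasDerivAt (fun s => ∑ j : Fin N, Φ s i j * x 0 j)
        (∑ j : Fin N, (A t * Φ t) i j * x 0 j) t :=
      HasDerivAt.fun_sum fun j _ => (hΦ t i j).mul_const (x 0 j)
    have heq : (A t).mulVec (g t) i = ∑ j : Fin N, (A t * Φ t) i j * x 0 j := by
      show (A t).mulVec ((Φ t).mulVec (x 0)) i = _
      rw [Matrix.mulVec_mulVec]
      simp [Matrix.mulVec, dotProduct]
    rw [heq]
    exact this
  -- uniqueness on [0, T]
  have hEq : EqOn x g (Icc 0 T) := by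
    apply ODE_solution_unique hlip
    · exact fun t _ => (hx t).continuousAt.continuousWithinAt
    · intro t ht
      have := (hx t).hasDerivWithinAt (s := Ici t)
      simpa only [hv, hc_eq t ht] using this
    · exact fun t _ => (hg' t).continuousAt.continuousWithinAt
    · intro t ht
      have := (hg' t).hasDerivWithinAt (s := Ici t)
      simpa only [hv, hc_eq t ht] using this
    · simp [hg, hΦ0, Matrix.one_mulVec]
  have hmain : (Φ T).mulVec (x 0) = x 0 := by
    have h1 : x T = g T := hEq ⟨hT.le, le_rfl⟩
    have h2 : x T = x 0 := by simpa using hxper 0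
    show g T = x 0
    rw [← h1, h2]
  refine ⟨hmain, ?_⟩
  apply Module.End.hasEigenvalue_of_hasEigenvector (x := x 0)
  constructor
  · rw [Module.End.mem_eigenspace_iff]
    simp [Matrix.toLin'_apply, hmain]
  · exact hx0
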